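/- Let Φ = (G, φ) be a connected T-gain graph. Then the multiset of eigenvalues of A(Φ) equals the multiset of eigenvalues of A(G) if and only if Φ is balanced. -/

import Mathlib

open scoped Classical

variable {V : Type*}

/-- The adjacency matrix of a `𝕋`-gain graph `Φ = (G, φ)`. -/
noncomputable def gainAdj [Fintype V] (G : SimpleGraph V) (φ : V → V → ℂ) :
    Matrix V V ℂ := fun i j => if G.Adj i j then φ i j else 0

/-- `φ` is a complex unit gain function on `G`: each gain is a unit complex number and
`φ(e_{ji}) = φ(e_{ij})⁻¹`. -/
def IsGain (G : SimpleGraph V) (φ : V → V → ℂ) : Prop :=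
  (∀ i j, G.Adj i j → ‖φ i j‖ = 1) ∧ (∀ i j, G.Adj i j → φ i j * φ j i = 1)

/-- The gain of a walk: the product of the gains of its (oriented) edges. -/
noncomputable def walkGain (φ : V → V → ℂ) {G : SimpleGraph V} {u v : V} (p : G.Walk u v) : ℂ :=
  (p.darts.map (fun d => φ d.toProd.1 d.toProd.2)).prod

/-- A gain graph is balanced if every cycle has gain `1`. -/
def IsBalanced (G : SimpleGraph V) (φ : V → V → ℂ) : Prop :=
  ∀ (v : V) (p : G.Walk v v), p.IsCycle → walkGain φ p = 1

/-- `Σ_{C ∈ C_i(G)} Re(φ(C))`: each unoriented, unrooted cycle of length `i` corresponds to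
exactly `2·i` rooted oriented cycle walks, all having the same real part of the gain. -/
noncomputable def cycleRSum (G : SimpleGraph V) (φ : V → V → ℂ) (i : ℕ) : ℝ :=
  (∑ᶠ q : {q : Σ' v : V, G.Walk v v // q.snd.IsCycle ∧ q.snd.length = i},
      (walkGain φ q.1.snd).re) / (2 * i)


section WG
variable {G : SimpleGraph V} {φ : V → V → ℂ}

@[simp] lemma walkGain_nil {v : V} : walkGain φ (SimpleGraph.Walk.nil : G.Walk v v) = 1 := by
  simp [walkGain]

@[simp] lemma walkGain_cons {u v w : V} (h : G.Adj u v) (p : G.Walk v w) :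
    walkGain φ (SimpleGraph.Walk.cons h p) = φ u v * walkGain φ p := by
  simp [walkGain]

@[simp] lemma walkGain_append {u v w : V} (p : G.Walk u v) (q : G.Walk v w) :
    walkGain φ (p.append q) = walkGain φ p * walkGain φ q := by
  simp [walkGain, SimpleGraph.Walk.darts_append]

lemma abs_walkGain (hφ : IsGain G φ) {u v : V} (p : G.Walk u v) :
    ‖walkGain φ p‖ = 1 := by
  induction p with
  | nil => simp
  | cons h p ih => rw [walkGain_cons, norm_mul, hφ.1 _ _ h, ih, one_mul]

lemma walkGain_mul_reverse (hφ : IsGain G φ) {u v : V} (p : G.Walk u v) :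
    walkGain φ p * walkGain φ p.reverse = 1 := by
  induction p with
  | nil => simp
  | @cons a b c h p ih =>
    rw [SimpleGraph.Walk.reverse_cons, walkGain_cons, walkGain_append, walkGain_cons,
      walkGain_nil, mul_one]
    calc φ a b * walkGain φ p * (walkGain φ p.reverse * φ b a)
        = (walkGain φ p * walkGain φ p.reverse) * (φ a b * φ b a) := by ring
      _ = 1 := by rw [ih, hφ.2 _ _ h, one_mul]

end WG

section Closed
open SimpleGraph
variable {G : SimpleGraph V} {φ : V → V → ℂ}

lemma walkGain_rotate {u v : V} (c : G.Walk v v) (h : u ∈ c.support) :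
    walkGain φ (c.rotate u h) = walkGain φ c := by
  unfold walkGain
  exact List.Perm.prod_eq (List.Perm.map _ (c.rotate_darts u h).perm)

lemma length_rotate' {u v : V} (c : G.Walk v v) (h : u ∈ c.support) :
    (c.rotate u h).length = c.length := by
  rw [← SimpleGraph.Walk.length_darts, ← SimpleGraph.Walk.length_darts]
  exact (c.rotate_darts u h).perm.length_eq

lemma walkGain_closed (hφ : IsGain G φ) (hb : IsBalanced G φ) :
    ∀ (m : ℕ) (v : V) (p : G.Walk v v), p.length = m → walkGain φ p = 1 := by
  intro m
  induction m using Nat.strong_induction_on with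
  | _ m IH =>
  intro v p hp
  cases p with
  | nil => simp
  | @cons _ w _ h q =>
    rw [SimpleGraph.Walk.length_cons] at hp
    by_cases hnd : q.support.Nodup
    · have hq : q.IsPath := (SimpleGraph.Walk.isPath_def q).mpr hnd
      by_cases he : s(v, w) ∈ q.edges
      · -- the edge occurs again; it must be the last edge of q
        have hvw : v ≠ w := h.ne
        obtain ⟨y, h2, r, hqr⟩ := SimpleGraph.Walk.exists_eq_cons_of_ne hvw q.reverse
        have hyw : y = w := by
          have he' : s(v, w) ∈ q.reverse.edges := by
            rw [SimpleGraph.Walk.edges_reverse, List.mem_reverse]; exact he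
          rw [hqr, SimpleGraph.Walk.edges_cons, List.mem_cons] at he'
          rcases he' with he' | he'
          · exact (Sym2.congr_right.mp he').symm
          · exfalso
            have hv : v ∈ r.support := SimpleGraph.Walk.fst_mem_support_of_mem_edges r he'
            have : q.reverse.IsPath := hq.reverse
            rw [hqr, SimpleGraph.Walk.cons_isPath_iff] at this
            exact this.2 hv
        subst hyw
        have hrl := congrArg SimpleGraph.Walk.length hqr
        rw [SimpleGraph.Walk.length_reverse, SimpleGraph.Walk.length_cons] at hrl
        have hr1 : walkGain φ r = 1 := IH r.length (by omega) _ r rfl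
        have h3 := walkGain_mul_reverse hφ q
        rw [hqr, walkGain_cons, hr1, mul_one] at h3
        rw [walkGain_cons, mul_comm]
        exact h3
      · exact hb _ _ ((SimpleGraph.Walk.cons_isCycle_iff q h).mpr ⟨hq, he⟩)
    · -- a repeated vertex: rotate and split
      obtain ⟨x, hx⟩ : ∃ x, 2 ≤ q.support.count x := by
        by_contra hc
        push_neg at hc
        exact hnd (List.nodup_iff_count_le_one.mpr fun a => by
          have := hc a; omega)
      have hxq : x ∈ q.support := by
        rw [← List.count_pos_iff]; omega
      have hxp : x ∈ (SimpleGraph.Walk.cons h q).support := by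
        rw [SimpleGraph.Walk.support_cons]; exact List.mem_cons_of_mem _ hxq
      set p : G.Walk v v := SimpleGraph.Walk.cons h q with hpdef
      have hcount : 2 ≤ (p.rotate x hxp).support.tail.count x := by
        have hperm := ((p.support_rotate x hxp).perm).count_eq x
        rw [hperm]
        have : p.support.tail = q.support := by
          rw [hpdef, SimpleGraph.Walk.support_cons]; rfl
        rw [this]; exact hx
      have hlen : (p.rotate x hxp).length = m := by
        rw [length_rotate', hpdef, SimpleGraph.Walk.length_cons]; exact hp
      have hgain : walkGain φ (p.rotate x hxp) = walkGain φ p := walkGain_rotate p hxp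
      -- now split the rotated walk
      suffices hs : walkGain φ (p.rotate x hxp) = 1 by rw [← hgain]; exact hs
      generalize hP : p.rotate x hxp = P at hcount hlen
      cases P with
      | nil => simp at hcount
      | @cons _ z _ h2 r =>
        have hxr : x ∈ r.support := by
          rw [← List.count_pos_iff]
          have : (SimpleGraph.Walk.cons h2 r).support.tail = r.support := by
            rw [SimpleGraph.Walk.support_cons]; rfl
          rw [this] at hcount; omega
        have hspec := r.take_spec hxr
        have hlens : (r.takeUntil x hxr).length + (r.dropUntil x hxr).length = r.length := by
          have := congrArg SimpleGraph.Walk.length hspec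
          rwa [SimpleGraph.Walk.length_append] at this
        have hr2 : (r.dropUntil x hxr).length ≠ 0 := by
          intro h0
          have hnil : r.dropUntil x hxr = SimpleGraph.Walk.nil := by
            cases hh : r.dropUntil x hxr with
            | nil => rfl
            | cons _ _ => rw [hh] at h0; simp at h0
          have : r = r.takeUntil x hxr := by
            conv_lhs => rw [← hspec]
            rw [hnil, SimpleGraph.Walk.append_nil]
          have hcnt1 := r.count_support_takeUntil_eq_one hxr
          have : r.support.count x = 1 := by rw [this]; exact hcnt1
          have htail : (SimpleGraph.Walk.cons h2 r).support.tail = r.support := by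
            rw [SimpleGraph.Walk.support_cons]; rfl
          rw [htail] at hcount; omega
        have hlc : (SimpleGraph.Walk.cons h2 r).length = m := by
          rw [← hP, length_rotate', hpdef, SimpleGraph.Walk.length_cons]; exact hp
        rw [SimpleGraph.Walk.length_cons] at hlc
        have hg1 : walkGain φ (SimpleGraph.Walk.cons h2 (r.takeUntil x hxr)) = 1 := by
          refine IH _ ?_ x _ rfl
          rw [SimpleGraph.Walk.length_cons]
          omega
        have hg2 : walkGain φ (r.dropUntil x hxr) = 1 := by
          refine IH _ ?_ x _ rfl
          omega
        rw [walkGain_cons] at hg1 ⊢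
        calc φ x z * walkGain φ r
            = φ x z * (walkGain φ (r.takeUntil x hxr) * walkGain φ (r.dropUntil x hxr)) := by
              rw [← walkGain_append, hspec]
          _ = 1 := by rw [← mul_assoc, hg1, hg2, mul_one]
end Closed

section Mat
open Matrix SimpleGraph Finset Polynomial

variable {W : Type*} [Fintype W] [DecidableEq W]

lemma gainAdj_pow_apply {G : SimpleGraph W} [DecidableRel G.Adj] (φ : W → W → ℂ) (k : ℕ)
    (u v : W) :
    ((gainAdj G φ) ^ k) u v = ∑ p ∈ G.finsetWalkLength k u v, walkGain φ p := by
  induction k generalizing u v with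
  | zero =>
    rw [pow_zero]
    by_cases huv : u = v
    · subst huv; simp [finsetWalkLength, Matrix.one_apply]
    · simp [finsetWalkLength, huv, Matrix.one_apply]
  | succ k ih =>
    rw [pow_succ', Matrix.mul_apply]
    simp only [finsetWalkLength]
    rw [Finset.sum_biUnion ?hdisj]
    case hdisj =>
      rintro ⟨x, hx⟩ - ⟨y, hy⟩ - hxy
      simp only [Function.onFun]
      rw [disjoint_iff_inf_le]
      intro p hp
      simp only [Finset.inf_eq_inter, Finset.mem_inter, Finset.mem_map,
        Function.Embedding.coeFn_mk, exists_prop] at hp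
      obtain ⟨⟨px, _, rfl⟩, ⟨py, hpy, hp⟩⟩ := hp
      cases hp
      simp at hxy
    have hLHS : ∀ w : W, gainAdj G φ u w * ((gainAdj G φ) ^ k) w v =
        if G.Adj u w then
          φ u w * ∑ p ∈ G.finsetWalkLength k w v, walkGain φ p
        else 0 := by
      intro w
      by_cases hw : G.Adj u w <;> simp [gainAdj, hw, ih]
    calc ∑ w : W, gainAdj G φ u w * ((gainAdj G φ) ^ k) w v
        = ∑ w : W, if G.Adj u w then
            φ u w * ∑ p ∈ G.finsetWalkLength k w v, walkGain φ p else 0 := by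
          exact Finset.sum_congr rfl fun w _ => hLHS w
      _ = ∑ w ∈ Finset.univ.filter (fun w => G.Adj u w),
            φ u w * ∑ p ∈ G.finsetWalkLength k w v, walkGain φ p :=
          (Finset.sum_filter _ _).symm
      _ = ∑ w ∈ G.neighborFinset u,
            φ u w * ∑ p ∈ G.finsetWalkLength k w v, walkGain φ p := by
          rw [SimpleGraph.neighborFinset_eq_filter]
      _ = ∑ w : G.neighborSet u,
            φ u w * ∑ p ∈ G.finsetWalkLength k w v, walkGain φ p := by
          rw [SimpleGraph.neighborFinset_def]
          exact (Finset.sum_set_coe _).symm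
      _ = ∑ (w : G.neighborSet u), ∑ p ∈ (G.finsetWalkLength k w v).map
            ⟨fun p => SimpleGraph.Walk.cons w.property p, fun _ _ h => by cases h; rfl⟩, walkGain φ p := by
          refine Finset.sum_congr rfl fun w _ => ?_
          rw [Finset.sum_map, Finset.mul_sum]
          exact Finset.sum_congr rfl fun p _ => by
            exact (walkGain_cons (φ := φ) w.property p).symm

lemma walkGain_one {G : SimpleGraph W} {u v : W} (p : G.Walk u v) :
    walkGain (fun _ _ => (1:ℂ)) p = 1 := by
  simp [walkGain]

lemma adjMatrix_eq_gainAdj (G : SimpleGraph W) [DecidableRel G.Adj] :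
    G.adjMatrix ℂ = gainAdj G (fun _ _ => 1) := by
  ext i j
  simp [gainAdj, SimpleGraph.adjMatrix_apply]

lemma conj_pow' (U D : Matrix W W ℂ) (h1 : U * star U = 1) (h2 : star U * U = 1) (k : ℕ) :
    (U * D * star U) ^ k = U * D ^ k * star U := by
  induction k with
  | zero => rw [pow_zero, pow_zero, mul_one, h1]
  | succ k ih =>
    rw [pow_succ, ih, pow_succ]
    calc U * D ^ k * star U * (U * D * star U)
        = U * D ^ k * (star U * U) * D * star U := by
          simp only [Matrix.mul_assoc]
      _ = U * (D ^ k * D) * star U := by rw [h2, Matrix.mul_one]; simp only [Matrix.mul_assoc]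

lemma trace_pow_herm {A : Matrix W W ℂ} (hA : A.IsHermitian) (k : ℕ) :
    (A ^ k).trace = ∑ i, ((hA.eigenvalues i : ℂ)) ^ k := by
  have h1 : (hA.eigenvectorUnitary : Matrix W W ℂ) * star (hA.eigenvectorUnitary : Matrix W W ℂ)
      = 1 := ((Unitary.mem_iff).mp hA.eigenvectorUnitary.2).2
  have h2 : star (hA.eigenvectorUnitary : Matrix W W ℂ) * (hA.eigenvectorUnitary : Matrix W W ℂ)
      = 1 := ((Unitary.mem_iff).mp hA.eigenvectorUnitary.2).1
  conv_lhs => rw [hA.spectral_theorem, Unitary.conjStarAlgAut_apply]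
  rw [conj_pow' _ _ h1 h2, Matrix.trace_mul_cycle, h2, Matrix.one_mul,
    Matrix.diagonal_pow, Matrix.trace_diagonal]
  rfl

lemma charpoly_conj' (P Q M : Matrix W W ℂ) (h1 : P * Q = 1) (h2 : Q * P = 1) :
    (P * M * Q).charpoly = M.charpoly := by
  have hmapPQ : (P.map (Polynomial.C : ℂ →+* ℂ[X]))
      * (Q.map (Polynomial.C : ℂ →+* ℂ[X])) = 1 := by
    rw [← Matrix.map_mul, h1]
    exact Matrix.map_one _ (map_zero _) (map_one _)
  have key : Matrix.charmatrix (P * M * Q) =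
      (P.map (Polynomial.C : ℂ →+* ℂ[X])) * M.charmatrix
        * (Q.map (Polynomial.C : ℂ →+* ℂ[X])) := by
    unfold Matrix.charmatrix
    rw [Matrix.mul_sub, Matrix.sub_mul]
    congr 1
    · rw [← (Matrix.scalar_commute (Polynomial.X : ℂ[X]) (fun r' => Commute.all _ _)
        (P.map (Polynomial.C : ℂ →+* ℂ[X]))).eq, Matrix.mul_assoc, hmapPQ, Matrix.mul_one]
    · simp only [RingHom.mapMatrix_apply, Matrix.map_mul]
  have hdet : (P.map (Polynomial.C : ℂ →+* ℂ[X])).det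
      * (Q.map (Polynomial.C : ℂ →+* ℂ[X])).det = 1 := by
    rw [← Matrix.det_mul, hmapPQ, Matrix.det_one]
  rw [Matrix.charpoly, key, Matrix.det_mul, Matrix.det_mul, Matrix.charpoly]
  calc (P.map (Polynomial.C : ℂ →+* ℂ[X])).det * (Matrix.charmatrix M).det
        * (Q.map (Polynomial.C : ℂ →+* ℂ[X])).det
      = (Matrix.charmatrix M).det * ((P.map (Polynomial.C : ℂ →+* ℂ[X])).det
        * (Q.map (Polynomial.C : ℂ →+* ℂ[X])).det) := by ring
    _ = (Matrix.charmatrix M).det := by rw [hdet, mul_one]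

lemma herm_charpoly {A : Matrix W W ℂ} (hA : A.IsHermitian) :
    A.charpoly = ∏ i, (Polynomial.X - Polynomial.C ((hA.eigenvalues i : ℂ))) := by
  have h1 : (hA.eigenvectorUnitary : Matrix W W ℂ) * star (hA.eigenvectorUnitary : Matrix W W ℂ)
      = 1 := ((Unitary.mem_iff).mp hA.eigenvectorUnitary.2).2
  have h2 : star (hA.eigenvectorUnitary : Matrix W W ℂ) * (hA.eigenvectorUnitary : Matrix W W ℂ)
      = 1 := ((Unitary.mem_iff).mp hA.eigenvectorUnitary.2).1
  conv_lhs => rw [hA.spectral_theorem, Unitary.conjStarAlgAut_apply]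
  rw [charpoly_conj' _ _ _ h1 h2]
  have hd : Matrix.charmatrix (Matrix.diagonal (RCLike.ofReal ∘ hA.eigenvalues) : Matrix W W ℂ)
      = Matrix.diagonal (fun i => (Polynomial.X : ℂ[X])
          - Polynomial.C ((hA.eigenvalues i : ℂ))) := by
    ext i j
    by_cases hij : i = j
    · subst hij
      simp [Matrix.charmatrix_apply_eq]
    · simp [Matrix.charmatrix_apply_ne _ _ _ hij, Matrix.diagonal_apply_ne _ hij]
  rw [Matrix.charpoly, hd, Matrix.det_diagonal]

end Mat

/-- For a connected `𝕋`-gain graph `Φ = (G, φ)`, the multiset of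
eigenvalues of `A(Φ)` equals that of `A(G)` iff `Φ` is balanced. -/
theorem cospectral_iff_balanced {n : ℕ} (G : SimpleGraph (Fin n)) [DecidableRel G.Adj]
    (hconn : G.Connected) (φ : Fin n → Fin n → ℂ) (hφ : IsGain G φ)
    (hA : (gainAdj G φ).IsHermitian) (hG : (G.adjMatrix ℂ).IsHermitian) :
    Finset.univ.val.map hA.eigenvalues = Finset.univ.val.map hG.eigenvalues ↔
      IsBalanced G φ := by
  constructor
  · intro h v p hcyc
    have htr : ∀ k : ℕ, ((gainAdj G φ) ^ k).trace = ((G.adjMatrix ℂ) ^ k).trace := by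
      intro k
      rw [trace_pow_herm hA k, trace_pow_herm hG k]
      have he : ∀ (ev : Fin n → ℝ), (∑ i, ((ev i : ℂ)) ^ k)
          = ((Finset.univ.val.map ev).map (fun r : ℝ => ((r : ℂ)) ^ k)).sum := by
        intro ev
        rw [Multiset.map_map]
        rfl
      rw [he, he, h]
    set k := p.length with hk
    have hsum := htr k
    rw [adjMatrix_eq_gainAdj] at hsum
    have hL : ((gainAdj G φ) ^ k).trace
        = ∑ w : Fin n, ∑ q ∈ G.finsetWalkLength k w w, walkGain φ q := by
      simp [Matrix.trace, Matrix.diag, gainAdj_pow_apply]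
    have hR : ((gainAdj G (fun _ _ => (1:ℂ))) ^ k).trace
        = ∑ w : Fin n, ∑ q ∈ G.finsetWalkLength k w w, (1:ℂ) := by
      simp only [Matrix.trace, Matrix.diag, gainAdj_pow_apply, walkGain_one]
    rw [hL, hR] at hsum
    have hre : ∑ w : Fin n, ∑ q ∈ G.finsetWalkLength k w w, (walkGain φ q).re
        = ∑ w : Fin n, ∑ q ∈ G.finsetWalkLength k w w, (1:ℝ) := by
      have h1 := congrArg Complex.re hsum
      simpa using h1
    have hle : ∀ w : Fin n, ∀ q ∈ G.finsetWalkLength k w w, (walkGain φ q).re ≤ 1 := by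
      intro w q _
      calc (walkGain φ q).re ≤ ‖walkGain φ q‖ := Complex.re_le_norm _
        _ = 1 := abs_walkGain hφ q
    have houter := (Finset.sum_eq_sum_iff_of_le
      (fun w _ => Finset.sum_le_sum (fun q hq => hle w q hq))).mp hre
    have hinner := (Finset.sum_eq_sum_iff_of_le (fun q hq => hle v q hq)).mp
      (houter v (Finset.mem_univ v))
    have hp1 : (walkGain φ p).re = 1 :=
      hinner p (by rw [SimpleGraph.mem_finsetWalkLength_iff])
    have habs := abs_walkGain hφ p
    have hsq : (walkGain φ p).re ^ 2 + (walkGain φ p).im ^ 2 = 1 := by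
      have h2 := congrArg (fun x : ℝ => x ^ 2) habs
      simp only [Complex.sq_norm, Complex.normSq_apply, one_pow] at h2
      rw [← h2]; ring
    have him : (walkGain φ p).im = 0 := by nlinarith
    refine Complex.ext ?_ ?_
    · rw [hp1]; norm_num
    · rw [him]; norm_num
  · intro hb
    obtain ⟨r⟩ := hconn.nonempty
    have hreach : ∀ w : Fin n, G.Reachable w r := fun w => hconn.preconnected w r
    set θ : Fin n → ℂ := fun w => walkGain φ (hreach w).some with hθ
    have hθne : ∀ w, θ w ≠ 0 := by
      intro w h0
      have habs := abs_walkGain hφ (hreach w).some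
      rw [show walkGain φ (hreach w).some = θ w from rfl, h0] at habs
      simp at habs
    have hkey : ∀ i j, G.Adj i j → φ i j = θ i * (θ j)⁻¹ := by
      intro i j hij
      have hc : walkGain φ
          ((SimpleGraph.Walk.cons hij (hreach j).some).append (hreach i).some.reverse) = 1 :=
        walkGain_closed hφ hb _ i _ rfl
      rw [walkGain_append, walkGain_cons] at hc
      have hrev : θ i * walkGain φ (hreach i).some.reverse = 1 := walkGain_mul_reverse hφ _
      have h5 : walkGain φ (hreach i).some.reverse = (θ i)⁻¹ :=
        (inv_eq_of_mul_eq_one_right hrev).symm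
      rw [h5] at hc
      have hji : φ i j * θ j = θ i := by
        have hc' : φ i j * θ j * (θ i)⁻¹ = 1 := hc
        field_simp [hθne i] at hc'
        exact hc'
      rw [← hji]
      field_simp [hθne j]
    have hmat : gainAdj G φ
        = Matrix.diagonal θ * G.adjMatrix ℂ * Matrix.diagonal (fun w => (θ w)⁻¹) := by
      ext i j
      simp only [Matrix.mul_diagonal, Matrix.diagonal_mul, gainAdj,
        SimpleGraph.adjMatrix_apply]
      by_cases hij : G.Adj i j
      · simp only [hij, if_true, mul_one]
        exact hkey i j hij
      · simp [hij]
    have h1 : Matrix.diagonal θ * Matrix.diagonal (fun w => (θ w)⁻¹) = 1 := by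
      rw [Matrix.diagonal_mul_diagonal]
      have : (fun w => θ w * (θ w)⁻¹) = fun _ => (1:ℂ) :=
        funext fun w => mul_inv_cancel₀ (hθne w)
      rw [this, Matrix.diagonal_one]
    have h2 : Matrix.diagonal (fun w => (θ w)⁻¹) * Matrix.diagonal θ = 1 := by
      rw [Matrix.diagonal_mul_diagonal]
      have : (fun w => (θ w)⁻¹ * θ w) = fun _ => (1:ℂ) :=
        funext fun w => inv_mul_cancel₀ (hθne w)
      rw [this, Matrix.diagonal_one]
    have hcp : (gainAdj G φ).charpoly = (G.adjMatrix ℂ).charpoly := by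
      rw [hmat]; exact charpoly_conj' _ _ _ h1 h2
    have hA' := herm_charpoly hA
    have hG' := herm_charpoly hG
    rw [hA', hG'] at hcp
    have e1 : ∀ (ev : Fin n → ℝ),
        (∏ i, (Polynomial.X - Polynomial.C ((ev i : ℂ)))) =
          ((Finset.univ.val.map (fun i => ((ev i : ℂ)))).map
            (fun a => Polynomial.X - Polynomial.C a)).prod := by
      intro ev; rw [Multiset.map_map]; rfl
    rw [e1, e1] at hcp
    have r1 := congrArg Polynomial.roots hcp
    rw [Polynomial.roots_multiset_prod_X_sub_C, Polynomial.roots_multiset_prod_X_sub_C] at r1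
    have hMS : (Finset.univ.val.map hA.eigenvalues).map (fun x : ℝ => (x : ℂ))
        = (Finset.univ.val.map hG.eigenvalues).map (fun x : ℝ => (x : ℂ)) := by
      rw [Multiset.map_map, Multiset.map_map]
      exact r1
    exact Multiset.map_injective Complex.ofReal_injective hMS
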